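/- (Covering by good rectangles.) Let μ be a Radon measure on ℝ^N, K compact with μ(K) > 0, r_0 > 0, and fix L ≥ 8, σ ∈ (0,1/2), 0 ≤ N_0 < N. Then for any ε > 0 there are finitely many pairwise disjoint rectangles E(x_i, r_i) with 0 < r_i ≤ r_0, μ(S(x_i,r_i) ∩ K) ≥ σ^{N−N_0}·(1/3)·2^{−2N−N_0−1}·(1+1/6)^{−1}·μ(E(x_i,r_i) ∩ K) > 0 for each i, and μ(K \ ⋃_i E(x_i,r_i)) ≤ ε·μ(K). -/

import Mathlib

open MeasureTheory

/-- The rectangle `E(x,r)`, which is `L²` times larger in the first `N₀` coordinates. -/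
def Erect {N₀ N₁ : ℕ} (L : ℝ) (x : (Fin N₀ → ℝ) × (Fin N₁ → ℝ)) (r : ℝ) :
    Set ((Fin N₀ → ℝ) × (Fin N₁ → ℝ)) :=
  {y | (∀ i, |x.1 i - y.1 i| ≤ L ^ 2 * r / 2) ∧ (∀ i, |x.2 i - y.2 i| ≤ 2 * r)}

/-- The thin core `S(x,r)` of the rectangle `E(x,r)`. -/
def Score {N₀ N₁ : ℕ} (L σ : ℝ) (x : (Fin N₀ → ℝ) × (Fin N₁ → ℝ)) (r : ℝ) :
    Set ((Fin N₀ → ℝ) × (Fin N₁ → ℝ)) :=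
  {y | (∀ i, |x.1 i - y.1 i| ≤ L ^ 2 * r / 2 - L * r / 2) ∧ (∀ i, |x.2 i - y.2 i| ≤ 2 * σ * r)}

open Metric Set ENNReal

namespace Stmt6

variable {N₀ N₁ : ℕ}

/-- Two-parameter coordinate box: fat halfwidth `a` in the first `N₀` coordinates,
thin halfwidth `b` in the remaining ones. -/
def bb (z : (Fin N₀ → ℝ) × (Fin N₁ → ℝ)) (a b : ℝ) : Set ((Fin N₀ → ℝ) × (Fin N₁ → ℝ)) :=
  {v | (∀ i, |z.1 i - v.1 i| ≤ a) ∧ ∀ i, |z.2 i - v.2 i| ≤ b}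

lemma mem_bb {z v : (Fin N₀ → ℝ) × (Fin N₁ → ℝ)} {a b : ℝ} :
    v ∈ bb z a b ↔ (∀ i, |z.1 i - v.1 i| ≤ a) ∧ ∀ i, |z.2 i - v.2 i| ≤ b := Iff.rfl

lemma bb_mono {z : (Fin N₀ → ℝ) × (Fin N₁ → ℝ)} {a b a' b' : ℝ} (ha : a ≤ a') (hb : b ≤ b') :
    bb z a b ⊆ bb z a' b' := fun v hv =>
  ⟨fun i => (hv.1 i).trans ha, fun i => (hv.2 i).trans hb⟩

lemma self_mem_bb {z : (Fin N₀ → ℝ) × (Fin N₁ → ℝ)} {a b : ℝ} (ha : 0 ≤ a) (hb : 0 ≤ b) :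
    z ∈ bb z a b := by
  constructor <;> intro i <;> simp [ha, hb]

lemma bb_subset_bb {z z' : (Fin N₀ → ℝ) × (Fin N₁ → ℝ)} {a b a' b' : ℝ}
    (hz : z' ∈ bb z a b) : bb z' a' b' ⊆ bb z (a + a') (b + b') := by
  intro v hv
  constructor
  · intro i
    calc |z.1 i - v.1 i| ≤ |z.1 i - z'.1 i| + |z'.1 i - v.1 i| := abs_sub_le _ _ _
    _ ≤ a + a' := add_le_add (hz.1 i) (hv.1 i)
  · intro i
    calc |z.2 i - v.2 i| ≤ |z.2 i - z'.2 i| + |z'.2 i - v.2 i| := abs_sub_le _ _ _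
    _ ≤ b + b' := add_le_add (hz.2 i) (hv.2 i)

lemma measurableSet_bb (z : (Fin N₀ → ℝ) × (Fin N₁ → ℝ)) (a b : ℝ) :
    MeasurableSet (bb z a b) := by
  have : bb z a b = (⋂ i, {v : (Fin N₀ → ℝ) × (Fin N₁ → ℝ) | |z.1 i - v.1 i| ≤ a}) ∩
      ⋂ i, {v : (Fin N₀ → ℝ) × (Fin N₁ → ℝ) | |z.2 i - v.2 i| ≤ b} := by
    ext v; simp [mem_bb]
  rw [this]
  apply MeasurableSet.inter <;> apply MeasurableSet.iInter <;> intro i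
  · exact measurableSet_le (by fun_prop) measurable_const
  · exact measurableSet_le (by fun_prop) measurable_const

lemma bb_eq_closedBall (z : (Fin N₀ → ℝ) × (Fin N₁ → ℝ)) {s : ℝ} (hs : 0 ≤ s) :
    bb z s s = closedBall z s := by
  ext v
  rw [mem_closedBall, Prod.dist_eq, max_le_iff, dist_pi_le_iff hs, dist_pi_le_iff hs]
  simp only [mem_bb, Real.dist_eq]
  constructor
  · rintro ⟨h1, h2⟩
    exact ⟨fun i => by rw [abs_sub_comm]; exact h1 i, fun i => by rw [abs_sub_comm]; exact h2 i⟩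
  · rintro ⟨h1, h2⟩
    exact ⟨fun i => by rw [abs_sub_comm]; exact h1 i, fun i => by rw [abs_sub_comm]; exact h2 i⟩

/-- One-dimensional subdivision lemma. -/
lemma oneD {c u s : ℝ} (n : ℕ) (hn : 0 < n) (hs : 0 < s) (h : |c - u| ≤ s) :
    ∃ j : Fin n, |(c - s + (2 * (j : ℝ) + 1) * (s / n)) - u| ≤ s / n := by
  have hnR : (0:ℝ) < n := by exact_mod_cast hn
  set w : ℝ := s / n with hw
  have hwpos : 0 < w := div_pos hs hnR
  have hnw : (n : ℝ) * w = s := by rw [hw]; field_simp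
  have hd1 : c - s ≤ u := by have := abs_le.1 h; linarith [this.1, this.2]
  have hd2 : u ≤ c + s := by have := abs_le.1 h; linarith [(abs_le.1 h).1]
  set d : ℝ := u - (c - s) with hdd
  have hd0 : 0 ≤ d := by simp [hdd]; linarith
  have hd2s : d ≤ 2 * s := by simp [hdd]; linarith
  by_cases hcase : ⌊d / (2 * w)⌋₊ ≤ n - 1
  · refine ⟨⟨⌊d / (2 * w)⌋₊, by omega⟩, ?_⟩
    have h1 : (⌊d / (2 * w)⌋₊ : ℝ) * (2 * w) ≤ d := by
      have := Nat.floor_le (a := d / (2*w)) (by positivity)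
      calc (⌊d / (2 * w)⌋₊ : ℝ) * (2*w) ≤ (d / (2*w)) * (2*w) := by
            apply mul_le_mul_of_nonneg_right this (by positivity)
      _ = d := by field_simp
    have h2 : d < ((⌊d / (2 * w)⌋₊ : ℝ) + 1) * (2 * w) := by
      have := Nat.lt_floor_add_one (d / (2*w))
      calc d = (d / (2*w)) * (2*w) := by field_simp
      _ < ((⌊d / (2 * w)⌋₊ : ℝ) + 1) * (2 * w) := by
            apply mul_lt_mul_of_pos_right this (by positivity)
    rw [abs_le]
    constructor <;> simp only [hdd] at h1 h2 ⊢ <;> nlinarith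
  · refine ⟨⟨n - 1, by omega⟩, ?_⟩
    have hge : (n : ℝ) ≤ d / (2 * w) := by
      have : n ≤ ⌊d / (2 * w)⌋₊ := by omega
      calc (n:ℝ) ≤ (⌊d / (2 * w)⌋₊ : ℝ) := by exact_mod_cast this
      _ ≤ d / (2*w) := Nat.floor_le (by positivity)
    have hdge : 2 * s ≤ d := by
      have h2w : (0:ℝ) < 2 * w := by positivity
      have := (le_div_iff₀ h2w).1 hge
      nlinarith [hnw]
    have hdeq : d = 2 * s := le_antisymm hd2s hdge
    have hcast : ((⟨n - 1, by omega⟩ : Fin n) : ℝ) = (n : ℝ) - 1 := by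
      have : ((n - 1 : ℕ) : ℝ) = (n : ℝ) - 1 := by
        have : (1:ℕ) ≤ n := hn
        push_cast [Nat.cast_sub this]; ring
      simpa using this
    rw [hcast, abs_le]
    constructor <;> simp only [hdd] at hdeq ⊢ <;> nlinarith [hnw]

/-- Grid of box centers subdividing `bb z s s`. -/
noncomputable def ctr (z : (Fin N₀ → ℝ) × (Fin N₁ → ℝ)) (s : ℝ) (n₀ n₁ : ℕ)
    (p : (Fin N₀ → Fin n₀) × (Fin N₁ → Fin n₁)) : (Fin N₀ → ℝ) × (Fin N₁ → ℝ) :=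
  (fun i => z.1 i - s + (2 * ((p.1 i : ℕ) : ℝ) + 1) * (s / n₀),
   fun i => z.2 i - s + (2 * ((p.2 i : ℕ) : ℝ) + 1) * (s / n₁))

lemma ctr_mem {z : (Fin N₀ → ℝ) × (Fin N₁ → ℝ)} {s : ℝ} (hs : 0 < s) {n₀ n₁ : ℕ}
    (hn₀ : 0 < n₀) (hn₁ : 0 < n₁) (p : (Fin N₀ → Fin n₀) × (Fin N₁ → Fin n₁)) :
    ctr z s n₀ n₁ p ∈ bb z s s := by
  have key : ∀ (n : ℕ), 0 < n → ∀ (j : ℕ), j < n → |s - (2 * (j:ℝ) + 1) * (s / n)| ≤ s := by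
    intro n hn j hj
    have hnR : (0:ℝ) < n := by exact_mod_cast hn
    have hjR : (j:ℝ) ≤ (n:ℝ) - 1 := by
      have : (j:ℝ) + 1 ≤ n := by exact_mod_cast hj
      linarith
    have h1 : 0 ≤ (2 * (j:ℝ) + 1) * (s / n) := by positivity
    have h2 : (2 * (j:ℝ) + 1) * (s / n) ≤ 2 * s := by
      have : (2 * (j:ℝ) + 1) ≤ 2 * n := by linarith
      calc (2 * (j:ℝ) + 1) * (s / n) ≤ (2 * n) * (s / n) :=
            mul_le_mul_of_nonneg_right this (by positivity)
      _ = 2 * s := by field_simp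
    rw [abs_le]; constructor <;> linarith
  constructor
  · intro i
    have : z.1 i - (ctr z s n₀ n₁ p).1 i = s - (2 * ((p.1 i : ℕ):ℝ) + 1) * (s / n₀) := by
      simp [ctr]; ring
    rw [this]; exact key n₀ hn₀ _ (p.1 i).2
  · intro i
    have : z.2 i - (ctr z s n₀ n₁ p).2 i = s - (2 * ((p.2 i : ℕ):ℝ) + 1) * (s / n₁) := by
      simp [ctr]; ring
    rw [this]; exact key n₁ hn₁ _ (p.2 i).2

lemma gridcover {z : (Fin N₀ → ℝ) × (Fin N₁ → ℝ)} {s : ℝ} (hs : 0 < s) {n₀ n₁ : ℕ}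
    (hn₀ : 0 < n₀) (hn₁ : 0 < n₁) {v : (Fin N₀ → ℝ) × (Fin N₁ → ℝ)} (hv : v ∈ bb z s s) :
    ∃ p, v ∈ bb (ctr z s n₀ n₁ p) (s / n₀) (s / n₁) := by
  have h1 : ∀ i : Fin N₀, ∃ j : Fin n₀,
      |(z.1 i - s + (2 * (j : ℝ) + 1) * (s / n₀)) - v.1 i| ≤ s / n₀ := fun i =>
    oneD n₀ hn₀ hs (hv.1 i)
  have h2 : ∀ i : Fin N₁, ∃ j : Fin n₁,
      |(z.2 i - s + (2 * (j : ℝ) + 1) * (s / n₁)) - v.2 i| ≤ s / n₁ := fun i =>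
    oneD n₁ hn₁ hs (hv.2 i)
  choose f1 hf1 using h1
  choose f2 hf2 using h2
  exact ⟨(f1, f2), hf1, hf2⟩

/-- The slot/pigeonhole lemma: inside `bb z s s` there is a point `z'` whose core at scale `s/2`
captures a definite fraction of the measure of `bb z s s`. -/
lemma slot {L σ : ℝ} (hL : 8 ≤ L) (hσ1 : 0 < σ) (hσ2 : σ < 1/2)
    (ρ : Measure ((Fin N₀ → ℝ) × (Fin N₁ → ℝ)))
    (z : (Fin N₀ → ℝ) × (Fin N₁ → ℝ)) {s : ℝ} (hs : 0 < s) :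
    ∃ z', z' ∈ bb z s s ∧
      ρ (bb z s s) ≤ ((3:ℝ≥0∞) ^ N₀ * (⌈2/σ⌉₊ : ℝ≥0∞) ^ N₁) *
        ρ (bb z' (s/2 - s/2/L) (σ * (s/2))) := by
  have hLpos : (0:ℝ) < L := by linarith
  set n₁ : ℕ := ⌈2/σ⌉₊ with hn₁def
  have hn₁pos : 0 < n₁ := Nat.ceil_pos.2 (by positivity)
  -- the cover
  have hcover : bb z s s ⊆ ⋃ p ∈ (Finset.univ : Finset ((Fin N₀ → Fin 3) × (Fin N₁ → Fin n₁))),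
      bb z s s ∩ bb (ctr z s 3 n₁ p) (s/3) (s/n₁) := by
    intro v hv
    obtain ⟨p, hp⟩ := gridcover (n₀ := 3) (n₁ := n₁) hs (by norm_num) hn₁pos hv
    exact mem_iUnion₂.2 ⟨p, Finset.mem_univ _, hv, hp⟩
  have hsum : ρ (bb z s s) ≤
      ∑ p ∈ (Finset.univ : Finset ((Fin N₀ → Fin 3) × (Fin N₁ → Fin n₁))),
        ρ (bb z s s ∩ bb (ctr z s 3 n₁ p) (s/3) (s/n₁)) :=
    (measure_mono hcover).trans (measure_biUnion_finset_le _ _)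
  -- pick maximal slot
  obtain ⟨p, -, hp⟩ := Finset.exists_max_image
    (Finset.univ : Finset ((Fin N₀ → Fin 3) × (Fin N₁ → Fin n₁)))
    (fun p => ρ (bb z s s ∩ bb (ctr z s 3 n₁ p) (s/3) (s/n₁)))
    ⟨(fun _ => 0, fun _ => ⟨0, hn₁pos⟩), Finset.mem_univ _⟩
  have hcard : ρ (bb z s s) ≤ ((3:ℝ≥0∞) ^ N₀ * (n₁ : ℝ≥0∞) ^ N₁) *
      ρ (bb z s s ∩ bb (ctr z s 3 n₁ p) (s/3) (s/n₁)) := by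
    refine hsum.trans ?_
    have := Finset.sum_le_card_nsmul
      (Finset.univ : Finset ((Fin N₀ → Fin 3) × (Fin N₁ → Fin n₁)))
      (fun q => ρ (bb z s s ∩ bb (ctr z s 3 n₁ q) (s/3) (s/n₁)))
      (ρ (bb z s s ∩ bb (ctr z s 3 n₁ p) (s/3) (s/n₁))) (fun q hq => hp q hq)
    refine this.trans ?_
    rw [nsmul_eq_mul]
    apply mul_le_mul_left
    rw [Finset.card_univ, Fintype.card_prod, Fintype.card_fun, Fintype.card_fun]
    push_cast
    simp [mul_pow]
  refine ⟨ctr z s 3 n₁ p, ctr_mem hs (by norm_num) hn₁pos p, hcard.trans ?_⟩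
  apply mul_le_mul_right
  apply measure_mono
  refine inter_subset_right.trans (bb_mono ?_ ?_)
  · -- s/3 ≤ s/2 - s/2/L
    have : s/2/L ≤ s/16 := by
      rw [div_le_div_iff₀ hLpos (by norm_num)]
      nlinarith
    linarith
  · -- s/n₁ ≤ σ * (s/2)
    have h2σ : (0:ℝ) < 2/σ := by positivity
    have hle : 2/σ ≤ (n₁ : ℝ) := Nat.le_ceil _
    calc s/(n₁:ℝ) ≤ s/(2/σ) := by
          apply div_le_div_of_nonneg_left hs.le h2σ hle
    _ = σ * (s/2) := by field_simp

/-- The key numeric inequality: the slot count times the goodness constant is at most `1/7`. -/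
lemma numeric {σ : ℝ} (hσ1 : 0 < σ) (hσ2 : σ < 1/2) :
    ((3:ℝ≥0∞) ^ N₀ * (⌈2/σ⌉₊ : ℝ≥0∞) ^ N₁) *
      ENNReal.ofReal ((1/7) * (1/8)^N₀ * (σ/4)^N₁) ≤ 7⁻¹ := by
  set n₁ : ℕ := ⌈2/σ⌉₊ with hn₁
  have hcast : ((3:ℝ≥0∞) ^ N₀ * (n₁ : ℝ≥0∞) ^ N₁) =
      ENNReal.ofReal ((3:ℝ)^N₀ * (n₁:ℝ)^N₁) := by
    rw [ENNReal.ofReal_mul (by positivity), ENNReal.ofReal_pow (by norm_num),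
      ENNReal.ofReal_pow (by positivity), ENNReal.ofReal_natCast]
    norm_num
  rw [hcast, ← ENNReal.ofReal_mul (by positivity)]
  have h7 : (7:ℝ≥0∞)⁻¹ = ENNReal.ofReal (1/7) := by
    rw [ENNReal.ofReal_div_of_pos (by norm_num)]
    norm_num
  rw [h7]
  apply ENNReal.ofReal_le_ofReal
  -- real inequality
  have hn₁le : (n₁ : ℝ) ≤ 3/σ := by
    have h1 : (n₁ : ℝ) < 2/σ + 1 := by
      exact_mod_cast Nat.ceil_lt_add_one (by positivity : (0:ℝ) ≤ 2/σ)
    have h2 : (1:ℝ) ≤ 1/σ := by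
      rw [le_div_iff₀ hσ1]
      linarith
    have : 2/σ + 1 ≤ 3/σ := by
      have : (1:ℝ)/σ + 2/σ = 3/σ := by ring
      linarith
    linarith
  have key : (3:ℝ)^N₀ * (n₁:ℝ)^N₁ * ((1/7) * (1/8)^N₀ * (σ/4)^N₁) =
      (1/7) * ((3/8)^N₀ * ((n₁:ℝ) * σ/4)^N₁) := by
    rw [div_pow, div_pow, div_pow, div_pow]
    field_simp
    ring
  rw [key]
  have h38 : ((3:ℝ)/8)^N₀ ≤ 1 := pow_le_one₀ (by norm_num) (by norm_num)
  have hthin : ((n₁:ℝ) * σ/4)^N₁ ≤ 1 := by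
    apply pow_le_one₀
    · positivity
    · have : (n₁:ℝ) * σ ≤ 3 := by
        calc (n₁:ℝ) * σ ≤ (3/σ) * σ := by nlinarith
        _ = 3 := by field_simp
      linarith
  nlinarith [pow_nonneg (by norm_num : (0:ℝ) ≤ 3/8) N₀, pow_nonneg (by positivity : (0:ℝ) ≤ (n₁:ℝ)*σ/4) N₁]

/-- Stopping-time argument: near any box of positive measure there is a "good" box. -/
lemma good_pair {L σ : ℝ} (hL : 8 ≤ L) (hσ1 : 0 < σ) (hσ2 : σ < 1/2)
    (ρ : Measure ((Fin N₀ → ℝ) × (Fin N₁ → ℝ))) [IsFiniteMeasure ρ]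
    (x : (Fin N₀ → ℝ) × (Fin N₁ → ℝ)) {t : ℝ} (ht : 0 < t) (hpos : 0 < ρ (bb x t t)) :
    ∃ z s, 0 < s ∧ s ≤ t ∧ bb z s s ⊆ bb x (2*t) (2*t) ∧
      ENNReal.ofReal ((1/7)*(1/8)^N₀*(σ/4)^N₁) * ρ (bb z s s) ≤ ρ (bb z (s - s/L) (σ*s)) ∧
      0 < ρ (bb z (s - s/L) (σ*s)) ∧
      ρ (bb x t t) ≤ ((3:ℝ≥0∞) ^ N₀ * (⌈2/σ⌉₊ : ℝ≥0∞) ^ N₁) * ρ (bb z s s) := by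
  have hLpos : (0:ℝ) < L := by linarith
  set c : ℝ := (1/7)*(1/8)^N₀*(σ/4)^N₁ with hc
  set CPe : ℝ≥0∞ := (3:ℝ≥0∞) ^ N₀ * (⌈2/σ⌉₊ : ℝ≥0∞) ^ N₁ with hCPe
  have hCPne : CPe ≠ 0 := by
    rw [hCPe]
    apply mul_ne_zero
    · exact pow_ne_zero _ (by norm_num)
    · apply pow_ne_zero
      simp only [ne_eq, Nat.cast_eq_zero]
      exact (Nat.ceil_pos.2 (by positivity : (0:ℝ) < 2/σ)).ne'
  have key : ∀ j : ℕ,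
      (∃ z s, 0 < s ∧ s ≤ t ∧ bb z s s ⊆ bb x (2*t) (2*t) ∧
        ENNReal.ofReal c * ρ (bb z s s) ≤ ρ (bb z (s - s/L) (σ*s)) ∧
        0 < ρ (bb z (s - s/L) (σ*s)) ∧
        ρ (bb x t t) ≤ CPe * ρ (bb z s s)) ∨
      (∃ z, z ∈ bb x (2*t - 2*t/2^j) (2*t - 2*t/2^j) ∧
        (7:ℝ≥0∞)^j * ρ (bb x t t) ≤ ρ (bb z (t/2^j) (t/2^j))) := by
    intro j
    induction j with
    | zero =>
      right
      refine ⟨x, ?_, ?_⟩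
      · have : 2*t - 2*t/2^(0:ℕ) = 0 := by norm_num
        rw [this]
        exact self_mem_bb le_rfl le_rfl
      · simp
    | succ j ih =>
      rcases ih with h | ⟨z, hz, hm⟩
      · exact Or.inl h
      set sj : ℝ := t/2^j with hsj
      have hsjpos : 0 < sj := by positivity
      obtain ⟨z', hz', hslot⟩ := slot hL hσ1 hσ2 ρ z hsjpos
      set s' : ℝ := t/2^(j+1) with hs'
      have hs'eq : sj/2 = s' := by
        rw [hsj, hs']
        rw [pow_succ]
        ring
      rw [hs'eq] at hslot
      have hs'pos : 0 < s' := by positivity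
      have hposx : (0:ℝ≥0∞) < (7:ℝ≥0∞)^j * ρ (bb x t t) :=
        ENNReal.mul_pos (pow_ne_zero _ (by norm_num)) hpos.ne'
      have hposz : 0 < ρ (bb z sj sj) := lt_of_lt_of_le hposx hm
      have hposcore : 0 < ρ (bb z' (s' - s'/L) (σ*s')) := by
        rw [pos_iff_ne_zero]
        intro h0
        rw [h0, mul_zero] at hslot
        exact hposz.ne' (le_antisymm hslot zero_le)
      have hz'x : z' ∈ bb x (2*t - t/2^j) (2*t - t/2^j) := by
        have h1 := bb_subset_bb hz hz'
        have : 2*t - 2*t/2^j + sj = 2*t - t/2^j := by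
          rw [hsj]; ring
        rwa [this] at h1
      by_cases hgood : ENNReal.ofReal c * ρ (bb z' s' s') ≤ ρ (bb z' (s' - s'/L) (σ*s'))
      · left
        refine ⟨z', s', hs'pos, ?_, ?_, hgood, hposcore, ?_⟩
        · rw [hs']
          apply div_le_self ht.le
          exact one_le_pow₀ (by norm_num)
        · -- bb z' s' s' ⊆ bb x (2t) (2t)
          have h2 := bb_subset_bb hz'x (a' := s') (b' := s')
          refine h2.trans (bb_mono ?_ ?_) <;>
          · have : t/2^(j+1) ≤ t/2^j := by
              apply div_le_div_of_nonneg_left ht.le (by positivity)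
              apply pow_le_pow_right₀ (by norm_num)
              omega
            rw [hs']
            linarith
        · -- capture
          have h1 : ρ (bb x t t) ≤ ρ (bb z sj sj) := by
            calc ρ (bb x t t) = 1 * ρ (bb x t t) := (one_mul _).symm
            _ ≤ (7:ℝ≥0∞)^j * ρ (bb x t t) := by
                  apply mul_le_mul_left
                  exact one_le_pow₀ (by norm_num)
            _ ≤ ρ (bb z sj sj) := hm
          refine h1.trans (hslot.trans ?_)
          apply mul_le_mul_right
          apply measure_mono
          apply bb_mono
          · have : 0 ≤ s'/L := by positivity
            linarith
          · nlinarith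
      · right
        refine ⟨z', ?_, ?_⟩
        · have : 2*t - 2*t/2^(j+1) = 2*t - t/2^j := by
            rw [pow_succ]; ring
          rwa [this]
        · have hle : ρ (bb z' (s' - s'/L) (σ*s')) ≤ ENNReal.ofReal c * ρ (bb z' s' s') :=
            (lt_of_not_ge hgood).le
          have hchain : ρ (bb z sj sj) ≤ 7⁻¹ * ρ (bb z' s' s') := by
            calc ρ (bb z sj sj) ≤ CPe * ρ (bb z' (s' - s'/L) (σ*s')) := hslot
            _ ≤ CPe * (ENNReal.ofReal c * ρ (bb z' s' s')) := mul_le_mul_right hle _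
            _ = (CPe * ENNReal.ofReal c) * ρ (bb z' s' s') := by
                  rw [hCPe]; ring
            _ ≤ 7⁻¹ * ρ (bb z' s' s') := by
                  apply mul_le_mul_left
                  exact numeric hσ1 hσ2
          calc (7:ℝ≥0∞)^(j+1) * ρ (bb x t t) = 7 * ((7:ℝ≥0∞)^j * ρ (bb x t t)) := by
                rw [pow_succ]; ring
          _ ≤ 7 * ρ (bb z sj sj) := mul_le_mul_right hm _
          _ ≤ 7 * (7⁻¹ * ρ (bb z' s' s')) := mul_le_mul_right hchain _
          _ = ρ (bb z' s' s') := by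
                rw [← mul_assoc, ENNReal.mul_inv_cancel (by norm_num) (by norm_num), one_mul]
  -- termination
  obtain ⟨n, hn⟩ := ENNReal.exists_nat_gt
    (ENNReal.div_lt_top (measure_ne_top ρ univ) hpos.ne').ne
  rcases key n with h | ⟨z, -, hm⟩
  · exact h
  exfalso
  have h1 : ρ univ < (n:ℝ≥0∞) * ρ (bb x t t) := by
    rw [← ENNReal.div_lt_iff (Or.inl hpos.ne') (Or.inl (measure_ne_top ρ _))]
    exact hn
  have h2 : (n:ℝ≥0∞) ≤ (7:ℝ≥0∞)^n := by
    calc (n:ℝ≥0∞) ≤ ((7^n : ℕ) : ℝ≥0∞) := by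
          exact_mod_cast (Nat.lt_pow_self (n := n) (by norm_num : 1 < 7)).le
    _ = (7:ℝ≥0∞)^n := by push_cast; ring
  have := calc ρ univ < (n:ℝ≥0∞) * ρ (bb x t t) := h1
    _ ≤ (7:ℝ≥0∞)^n * ρ (bb x t t) := mul_le_mul_left h2 _
    _ ≤ ρ (bb z (t/2^n) (t/2^n)) := hm
    _ ≤ ρ univ := measure_mono (subset_univ _)
  exact lt_irrefl _ this

/-- Doubling-type scales exist almost everywhere: the set of points near which
`ρ (bb x t t) > 4^(N+1) · ρ (bb x (t/4) (t/4))` for all small `t` is null. -/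
lemma bad_null (ρ : Measure ((Fin N₀ → ℝ) × (Fin N₁ → ℝ))) [IsFiniteMeasure ρ]
    {K' : Set ((Fin N₀ → ℝ) × (Fin N₁ → ℝ))} (hK' : Bornology.IsBounded K')
    (hconc : ρ K'ᶜ = 0) {δ : ℝ} (hδ : 0 < δ) :
    ρ {x | ∀ t : ℝ, 0 < t → t ≤ δ →
      ENNReal.ofReal ((4:ℝ)^(N₀+N₁+1)) * ρ (bb x (t/4) (t/4)) < ρ (bb x t t)} = 0 := by
  set N : ℕ := N₀ + N₁ with hN
  set Λ : ℝ≥0∞ := ENNReal.ofReal ((4:ℝ)^(N+1)) with hΛ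
  have hΛ0 : Λ ≠ 0 := by
    rw [hΛ]
    simp only [ne_eq, ENNReal.ofReal_eq_zero, not_le]
    positivity
  have hΛtop : Λ ≠ ⊤ := ENNReal.ofReal_ne_top
  set Bad : Set ((Fin N₀ → ℝ) × (Fin N₁ → ℝ)) :=
    {x | ∀ t : ℝ, 0 < t → t ≤ δ → Λ * ρ (bb x (t/4) (t/4)) < ρ (bb x t t)} with hBad
  -- decay of measures of concentric boxes at bad points
  have decay : ∀ x ∈ Bad, ∀ k : ℕ, ρ (bb x (δ/4^k) (δ/4^k)) ≤ Λ⁻¹^k * ρ univ := by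
    intro x hx k
    induction k with
    | zero => simpa using measure_mono (subset_univ _)
    | succ k ih =>
      have ht : (0:ℝ) < δ/4^k := by positivity
      have htδ : δ/4^k ≤ δ := div_le_self hδ.le (one_le_pow₀ (by norm_num))
      have hstep := hx (δ/4^k) ht htδ
      have heq : δ/4^k/4 = δ/4^(k+1) := by
        rw [pow_succ]; ring
      rw [heq] at hstep
      have : ρ (bb x (δ/4^(k+1)) (δ/4^(k+1))) ≤ Λ⁻¹ * ρ (bb x (δ/4^k) (δ/4^k)) := by
        calc ρ (bb x (δ/4^(k+1)) (δ/4^(k+1)))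
            = Λ⁻¹ * (Λ * ρ (bb x (δ/4^(k+1)) (δ/4^(k+1)))) := by
              rw [← mul_assoc, ENNReal.inv_mul_cancel hΛ0 hΛtop, one_mul]
        _ ≤ Λ⁻¹ * ρ (bb x (δ/4^k) (δ/4^k)) := mul_le_mul_right hstep.le _
      calc ρ (bb x (δ/4^(k+1)) (δ/4^(k+1))) ≤ Λ⁻¹ * ρ (bb x (δ/4^k) (δ/4^k)) := this
      _ ≤ Λ⁻¹ * (Λ⁻¹^k * ρ univ) := mul_le_mul_right ih _
      _ = Λ⁻¹^(k+1) * ρ univ := by rw [pow_succ]; ring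
  -- bounding box for K'
  obtain ⟨r, hr⟩ := (Metric.isBounded_iff_subset_closedBall (0 : (Fin N₀ → ℝ) × (Fin N₁ → ℝ))).1 hK'
  set R : ℝ := max r 1 with hR
  have hR1 : (1:ℝ) ≤ R := le_max_right _ _
  have hRpos : (0:ℝ) < R := lt_of_lt_of_le one_pos hR1
  have hK'R : K' ⊆ bb 0 R R := by
    rw [bb_eq_closedBall _ hRpos.le]
    exact hr.trans (Metric.closedBall_subset_closedBall (le_max_left _ _))
  -- counting at scale k
  have main : ∀ k : ℕ, ρ (Bad ∩ K') ≤
      ENNReal.ofReal (((2*R+δ)/δ)^N * (1/4)^k) * ρ univ := by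
    intro k
    set η : ℝ := δ/4^k with hη
    have hηpos : 0 < η := by positivity
    set n : ℕ := ⌈2*R/η⌉₊ with hn
    have hnpos : 0 < n := Nat.ceil_pos.2 (by positivity)
    have hhalf : R/(n:ℝ) ≤ η/2 := by
      have h1 : 2*R/η ≤ (n:ℝ) := Nat.le_ceil _
      rw [div_le_div_iff₀ (by exact_mod_cast hnpos) (by norm_num)]
      rw [div_le_iff₀ hηpos] at h1
      nlinarith
    -- termwise bound
    have hterm : ∀ p : (Fin N₀ → Fin n) × (Fin N₁ → Fin n),
        ρ (Bad ∩ K' ∩ bb (ctr 0 R n n p) (R/n) (R/n)) ≤ Λ⁻¹^k * ρ univ := by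
      intro p
      by_cases hne : (Bad ∩ K' ∩ bb (ctr 0 R n n p) (R/n) (R/n)).Nonempty
      · obtain ⟨q, hq⟩ := hne
        have hsub : Bad ∩ K' ∩ bb (ctr 0 R n n p) (R/n) (R/n) ⊆ bb q η η := by
          intro v hv
          constructor
          · intro i
            calc |q.1 i - v.1 i| ≤ |(ctr 0 R n n p).1 i - q.1 i| + |(ctr 0 R n n p).1 i - v.1 i| := by
                  rw [abs_sub_comm ((ctr 0 R n n p).1 i) (q.1 i)]
                  exact abs_sub_le _ _ _
            _ ≤ R/n + R/n := add_le_add (hq.2.1 i) (hv.2.1 i)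
            _ ≤ η := by linarith
          · intro i
            calc |q.2 i - v.2 i| ≤ |(ctr 0 R n n p).2 i - q.2 i| + |(ctr 0 R n n p).2 i - v.2 i| := by
                  rw [abs_sub_comm ((ctr 0 R n n p).2 i) (q.2 i)]
                  exact abs_sub_le _ _ _
            _ ≤ R/n + R/n := add_le_add (hq.2.2 i) (hv.2.2 i)
            _ ≤ η := by linarith
        calc ρ (Bad ∩ K' ∩ bb (ctr 0 R n n p) (R/n) (R/n)) ≤ ρ (bb q η η) :=
              measure_mono hsub
        _ ≤ Λ⁻¹^k * ρ univ := decay q hq.1.1 k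
      · rw [not_nonempty_iff_eq_empty] at hne
        simp [hne]
    -- sum over the grid
    have hcover : Bad ∩ K' ⊆
        ⋃ p ∈ (Finset.univ : Finset ((Fin N₀ → Fin n) × (Fin N₁ → Fin n))),
          Bad ∩ K' ∩ bb (ctr 0 R n n p) (R/n) (R/n) := by
      intro v hv
      obtain ⟨p, hp⟩ := gridcover (n₀ := n) (n₁ := n) hRpos hnpos hnpos (hK'R hv.2)
      exact mem_iUnion₂.2 ⟨p, Finset.mem_univ _, hv, hp⟩
    have hsum : ρ (Bad ∩ K') ≤ (Fintype.card ((Fin N₀ → Fin n) × (Fin N₁ → Fin n))) •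
        (Λ⁻¹^k * ρ univ) := by
      refine (measure_mono hcover).trans ((measure_biUnion_finset_le _ _).trans ?_)
      rw [← Finset.card_univ]
      exact Finset.sum_le_card_nsmul _ _ _ (fun p _ => hterm p)
    rw [nsmul_eq_mul] at hsum
    refine hsum.trans ?_
    rw [← mul_assoc]
    apply mul_le_mul_left
    -- cast and numeric bound
    have hcard : (Fintype.card ((Fin N₀ → Fin n) × (Fin N₁ → Fin n)) : ℝ≥0∞) =
        ((n:ℝ≥0∞))^N := by
      rw [Fintype.card_prod, Fintype.card_fun, Fintype.card_fun]
      push_cast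
      rw [Fintype.card_fin, Fintype.card_fin, Fintype.card_fin, ← pow_add, hN]
    rw [hcard]
    have hΛinv : Λ⁻¹ = ENNReal.ofReal (((4:ℝ)^(N+1))⁻¹) := by
      rw [hΛ, ← ENNReal.ofReal_inv_of_pos (by positivity)]
    rw [hΛinv, ← ENNReal.ofReal_pow (by positivity)]
    have hncast : ((n:ℝ≥0∞))^N = ENNReal.ofReal ((n:ℝ)^N) := by
      rw [← ENNReal.ofReal_natCast n, ← ENNReal.ofReal_pow (by positivity)]
    rw [hncast, ← ENNReal.ofReal_mul (by positivity)]
    apply ENNReal.ofReal_le_ofReal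
    -- the real inequality
    have hnle : (n:ℝ) ≤ (2*R+δ)/δ * 4^k := by
      have h1 : (n:ℝ) < 2*R/η + 1 := by
        exact_mod_cast Nat.ceil_lt_add_one (by positivity : (0:ℝ) ≤ 2*R/η)
      have h2 : 2*R/η = 2*R*4^k/δ := by
        rw [hη]
        field_simp
      have h3 : (1:ℝ) ≤ 4^k := one_le_pow₀ (by norm_num)
      have h4 : 2*R*4^k/δ + 1 ≤ (2*R+δ)/δ * 4^k := by
        rw [div_add' _ _ _ hδ.ne', div_le_iff₀ hδ]
        have he : (2*R+δ)/δ * 4^k * δ = (2*R+δ) * 4^k := by field_simp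
        rw [he]
        nlinarith [mul_pos hδ (by positivity : (0:ℝ) < 4^k)]
      linarith
    have hnn : (0:ℝ) ≤ (n:ℝ) := by positivity
    have e1 : (((4:ℝ)^(N+1))⁻¹)^k = ((4:ℝ)^(k*N) * 4^k)⁻¹ := by
      rw [inv_pow, ← pow_mul]
      congr 1
      rw [← pow_add]
      congr 1
      ring
    have e2 : ((n:ℝ))^N ≤ ((2*R+δ)/δ)^N * 4^(k*N) := by
      calc ((n:ℝ))^N ≤ ((2*R+δ)/δ * 4^k)^N := pow_le_pow_left₀ hnn hnle N
      _ = ((2*R+δ)/δ)^N * 4^(k*N) := by rw [mul_pow, ← pow_mul]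
    calc (n:ℝ)^N * (((4:ℝ)^(N+1))⁻¹)^k ≤ (((2*R+δ)/δ)^N * 4^(k*N)) * (((4:ℝ)^(N+1))⁻¹)^k := by
          apply mul_le_mul_of_nonneg_right e2 (by positivity)
    _ = ((2*R+δ)/δ)^N * (1/4)^k := by
          rw [e1]
          rw [div_pow]
          field_simp
          ring_nf; rw [← mul_pow]; norm_num
  -- conclude by letting k → ∞
  have hρK : ρ Bad ≤ ρ (Bad ∩ K') := by
    calc ρ Bad ≤ ρ ((Bad ∩ K') ∪ K'ᶜ) := measure_mono (fun v hv => by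
          by_cases hvK : v ∈ K'
          · exact Or.inl ⟨hv, hvK⟩
          · exact Or.inr hvK)
    _ ≤ ρ (Bad ∩ K') + ρ K'ᶜ := measure_union_le _ _
    _ = ρ (Bad ∩ K') := by rw [hconc, add_zero]
  have htend : Filter.Tendsto
      (fun k : ℕ => ENNReal.ofReal (((2*R+δ)/δ)^N * (1/4)^k) * ρ univ)
      Filter.atTop (nhds 0) := by
    have h1 : Filter.Tendsto (fun k : ℕ => ENNReal.ofReal (((2*R+δ)/δ)^N * (1/4)^k))
        Filter.atTop (nhds 0) := by
      have : Filter.Tendsto (fun k : ℕ => ((2*R+δ)/δ)^N * (1/4)^k) Filter.atTop (nhds 0) := by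
        have := tendsto_pow_atTop_nhds_zero_of_lt_one (by norm_num : (0:ℝ) ≤ 1/4)
          (by norm_num : (1:ℝ)/4 < 1)
        have h2 := this.const_mul (((2*R+δ)/δ)^N)
        simpa using h2
      have h3 := ENNReal.tendsto_ofReal this
      simpa using h3
    have h2 := ENNReal.Tendsto.mul_const h1 (Or.inr (measure_ne_top ρ univ))
    simpa using h2
  have hle : ρ (Bad ∩ K') ≤ 0 := ge_of_tendsto' htend main
  exact le_antisymm (hρK.trans hle) zero_le

/-- Goodness predicate for a rectangle (in image-space coordinates). -/
def IsGood (L σ : ℝ) (ρ : Measure ((Fin N₀ → ℝ) × (Fin N₁ → ℝ)))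
    (q : ((Fin N₀ → ℝ) × (Fin N₁ → ℝ)) × ℝ) : Prop :=
  ENNReal.ofReal ((1/7)*(1/8)^N₀*(σ/4)^N₁) * ρ (bb q.1 q.2 q.2) ≤
    ρ (bb q.1 (q.2 - q.2/L) (σ*q.2)) ∧ 0 < ρ (bb q.1 (q.2 - q.2/L) (σ*q.2))

/-- Inside any admissible ball, either the ball is `A'`-null, or we can find a good
rectangle capturing a definite fraction of its measure. -/
lemma exists_good_in_ball {L σ : ℝ} (hL : 8 ≤ L) (hσ1 : 0 < σ) (hσ2 : σ < 1/2)
    (ρ : Measure ((Fin N₀ → ℝ) × (Fin N₁ → ℝ))) [IsFiniteMeasure ρ] {r₀ : ℝ}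
    (x : (Fin N₀ → ℝ) × (Fin N₁ → ℝ)) {t : ℝ} (ht : 0 < t) (htr : t ≤ r₀)
    (hΛ : ρ (bb x t t) ≤ ENNReal.ofReal ((4:ℝ)^(N₀+N₁+1)) * ρ (bb x (t/4) (t/4))) :
    ∃ q : ((Fin N₀ → ℝ) × (Fin N₁ → ℝ)) × ℝ,
      ρ (bb x t t) ≤ (((3:ℝ≥0∞) ^ N₀ * (⌈2/σ⌉₊ : ℝ≥0∞) ^ N₁) *
        ENNReal.ofReal ((4:ℝ)^(N₀+N₁+1))) * ρ (bb q.1 q.2 q.2) ∧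
      (ρ (bb q.1 q.2 q.2) = 0 ∨
        (0 < q.2 ∧ q.2 ≤ r₀ ∧ bb q.1 q.2 q.2 ⊆ bb x t t ∧ IsGood L σ ρ q)) := by
  set Λ : ℝ≥0∞ := ENNReal.ofReal ((4:ℝ)^(N₀+N₁+1)) with hΛdef
  set CPe : ℝ≥0∞ := (3:ℝ≥0∞) ^ N₀ * (⌈2/σ⌉₊ : ℝ≥0∞) ^ N₁ with hCPdef
  by_cases h0 : ρ (bb x (t/4) (t/4)) = 0
  · refine ⟨(x, -1), ?_, Or.inl ?_⟩
    · rw [h0, mul_zero] at hΛ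
      have h00 : ρ (bb x t t) = 0 := le_antisymm hΛ zero_le
      rw [h00]
      exact zero_le
    · have : bb (x, -1).1 (x, -1).2 (x, -1).2 ⊆ bb x (t/4) (t/4) := by
        apply bb_mono <;> simp <;> linarith
      exact le_antisymm ((measure_mono this).trans h0.le) zero_le
  · have ht4 : (0:ℝ) < t/4 := by positivity
    have hpos : 0 < ρ (bb x (t/4) (t/4)) := pos_iff_ne_zero.2 h0
    obtain ⟨z, s, hs, hst, hsub, hgood, hcorepos, hcapture⟩ :=
      good_pair hL hσ1 hσ2 ρ x ht4 hpos
    refine ⟨(z, s), ?_, Or.inr ⟨hs, ?_, ?_, hgood, hcorepos⟩⟩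
    · calc ρ (bb x t t) ≤ Λ * ρ (bb x (t/4) (t/4)) := hΛ
      _ ≤ Λ * (CPe * ρ (bb z s s)) := mul_le_mul_right hcapture _
      _ = (CPe * Λ) * ρ (bb z s s) := by ring
    · linarith
    · refine hsub.trans (bb_mono ?_ ?_) <;> linarith


lemma bb_comm {x v : (Fin N₀ → ℝ) × (Fin N₁ → ℝ)} {a b : ℝ} :
    v ∈ bb x a b ↔ x ∈ bb v a b := by
  constructor <;> rintro ⟨h1, h2⟩ <;>
    exact ⟨fun i => by rw [abs_sub_comm]; exact h1 i,
           fun i => by rw [abs_sub_comm]; exact h2 i⟩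

/-- The union of the rectangles of a finite family. -/
def Ubb (F : Finset (((Fin N₀ → ℝ) × (Fin N₁ → ℝ)) × ℝ)) : Set ((Fin N₀ → ℝ) × (Fin N₁ → ℝ)) :=
  ⋃ q ∈ F, bb q.1 q.2 q.2

lemma measurableSet_Ubb (F : Finset (((Fin N₀ → ℝ) × (Fin N₁ → ℝ)) × ℝ)) :
    MeasurableSet (Ubb F) :=
  MeasurableSet.biUnion F.countable_toSet (fun q _ => measurableSet_bb q.1 q.2 q.2)

/-- Admissible finite families of disjoint good rectangles. -/
def GoodF (L σ r₀ : ℝ) (ρ : Measure ((Fin N₀ → ℝ) × (Fin N₁ → ℝ)))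
    (F : Finset (((Fin N₀ → ℝ) × (Fin N₁ → ℝ)) × ℝ)) : Prop :=
  ((F : Set (((Fin N₀ → ℝ) × (Fin N₁ → ℝ)) × ℝ)).PairwiseDisjoint fun q => bb q.1 q.2 q.2) ∧
  ∀ q ∈ F, 0 < q.2 ∧ q.2 ≤ r₀ ∧ IsGood L σ ρ q

/-- The capture constant of one round. -/
noncomputable def kap (N₀ N₁ : ℕ) (σ : ℝ) : ℝ≥0∞ :=
  (8 * ((3:ℝ≥0∞) ^ N₀ * (⌈2/σ⌉₊ : ℝ≥0∞) ^ N₁) * ENNReal.ofReal ((4:ℝ)^(N₀+N₁+1)))⁻¹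

lemma kap_pos {σ : ℝ} : 0 < kap N₀ N₁ σ := by
  rw [kap, pos_iff_ne_zero]
  apply ENNReal.inv_ne_zero.2
  apply ENNReal.mul_ne_top
  · apply ENNReal.mul_ne_top (by norm_num)
    apply ENNReal.mul_ne_top
    · exact ENNReal.pow_ne_top (by norm_num)
    · exact ENNReal.pow_ne_top (ENNReal.natCast_ne_top _)
  · exact ENNReal.ofReal_ne_top

lemma kap_le_one {σ : ℝ} (hσ1 : 0 < σ) (hσ2 : σ < 1/2) : kap N₀ N₁ σ ≤ 1 := by
  rw [kap]
  apply ENNReal.inv_le_one.2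
  calc (1:ℝ≥0∞) = 1 * (1 * 1) * 1 := by norm_num
  _ ≤ 8 * ((3:ℝ≥0∞) ^ N₀ * (⌈2/σ⌉₊ : ℝ≥0∞) ^ N₁) * ENNReal.ofReal ((4:ℝ)^(N₀+N₁+1)) := by
      gcongr
      · norm_num
      · exact one_le_pow₀ (by norm_num)
      · apply one_le_pow₀
        have : (1:ℕ) ≤ ⌈2/σ⌉₊ := Nat.ceil_pos.2 (by positivity)
        exact_mod_cast this
      · rw [← ENNReal.ofReal_one]
        exact ENNReal.ofReal_le_ofReal (one_le_pow₀ (by norm_num))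

/-- One round of the construction: extend the family to capture a `kap`-fraction
of the remaining mass. -/
lemma round {L σ : ℝ} (hL : 8 ≤ L) (hσ1 : 0 < σ) (hσ2 : σ < 1/2)
    (ρ : Measure ((Fin N₀ → ℝ) × (Fin N₁ → ℝ))) [IsFiniteMeasure ρ]
    {K' : Set ((Fin N₀ → ℝ) × (Fin N₁ → ℝ))} (hK'b : Bornology.IsBounded K')
    (hK'm : MeasurableSet K') (hconc : ρ K'ᶜ = 0)
    {r₀ : ℝ} (hr₀ : 0 < r₀)
    {F : Finset (((Fin N₀ → ℝ) × (Fin N₁ → ℝ)) × ℝ)} (hF : GoodF L σ r₀ ρ F)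
    (hw : ρ (univ \ Ubb F) ≠ 0) :
    ∃ F', F ⊆ F' ∧ GoodF L σ r₀ ρ F' ∧
      ρ (univ \ Ubb F') + kap N₀ N₁ σ * ρ (univ \ Ubb F) ≤ ρ (univ \ Ubb F) := by
  classical
  set Λ : ℝ≥0∞ := ENNReal.ofReal ((4:ℝ)^(N₀+N₁+1)) with hΛdef
  set CPe : ℝ≥0∞ := (3:ℝ≥0∞) ^ N₀ * (⌈2/σ⌉₊ : ℝ≥0∞) ^ N₁ with hCPdef
  have hCPΛ0 : CPe * Λ ≠ 0 := by
    apply mul_ne_zero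
    · apply mul_ne_zero (pow_ne_zero _ (by norm_num))
      apply pow_ne_zero
      simp only [ne_eq, Nat.cast_eq_zero]
      exact (Nat.ceil_pos.2 (by positivity : (0:ℝ) < 2/σ)).ne'
    · simp only [hΛdef, ne_eq, ENNReal.ofReal_eq_zero, not_le]
      positivity
  have hCPΛtop : CPe * Λ ≠ ⊤ := by
    apply ENNReal.mul_ne_top
    · apply ENNReal.mul_ne_top (ENNReal.pow_ne_top (by norm_num))
      exact ENNReal.pow_ne_top (ENNReal.natCast_ne_top _)
    · exact ENNReal.ofReal_ne_top
  set w : ℝ≥0∞ := ρ (univ \ Ubb F) with hwdef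
  have hwpos : 0 < w := pos_iff_ne_zero.2 hw
  have hwtop : w ≠ ⊤ := measure_ne_top _ _
  -- collar
  set T : ℕ → Set ((Fin N₀ → ℝ) × (Fin N₁ → ℝ)) := fun m => (K' \ Ubb F) ∩
      ⋃ q ∈ F, bb q.1 (q.2 + 1/(m+1)) (q.2 + 1/(m+1)) with hTdef
  have hTmeas : ∀ m, MeasurableSet (T m) := fun m =>
    (hK'm.diff (measurableSet_Ubb F)).inter
      (MeasurableSet.biUnion F.countable_toSet (fun q _ => measurableSet_bb _ _ _))
  have hTanti : Antitone T := by
    intro m m' hmm'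
    apply inter_subset_inter_right
    intro v hv
    obtain ⟨q, hq, hvq⟩ := mem_iUnion₂.1 hv
    refine mem_iUnion₂.2 ⟨q, hq, ?_⟩
    have : 1/((m':ℝ)+1) ≤ 1/((m:ℝ)+1) := by
      apply div_le_div_of_nonneg_left (by norm_num) (by positivity)
      exact_mod_cast Nat.succ_le_succ hmm'
    exact bb_mono (by linarith) (by linarith) hvq
  have hTempty : ⋂ m, T m = ∅ := by
    ext x
    simp only [mem_iInter, mem_empty_iff_false, iff_false]
    intro hx
    have hxU : x ∉ Ubb F := (hx 0).1.2
    have hgap : ∀ q : (((Fin N₀ → ℝ) × (Fin N₁ → ℝ)) × ℝ), ∃ ε, 0 < ε ∧ (q ∈ F → x ∉ bb q.1 (q.2 + ε) (q.2 + ε)) := by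
      intro q
      by_cases hq : q ∈ F
      · have hxq : x ∉ bb q.1 q.2 q.2 := fun hmem => hxU (mem_iUnion₂.2 ⟨q, hq, hmem⟩)
        rw [mem_bb, not_and_or] at hxq
        rcases hxq with h | h
        · push_neg at h
          obtain ⟨i, hi⟩ := h
          refine ⟨(|q.1.1 i - x.1 i| - q.2)/2, by linarith, fun _ hmem => ?_⟩
          have := hmem.1 i
          linarith
        · push_neg at h
          obtain ⟨i, hi⟩ := h
          refine ⟨(|q.1.2 i - x.2 i| - q.2)/2, by linarith, fun _ hmem => ?_⟩
          have := hmem.2 i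
          linarith
      · exact ⟨1, one_pos, fun h => absurd h hq⟩
    choose εf hεpos hεprop using hgap
    obtain ⟨q₀, hq₀, -⟩ := mem_iUnion₂.1 (hx 0).2
    have hFne : F.Nonempty := ⟨q₀, hq₀⟩
    set ε : ℝ := F.inf' hFne εf with hεdef
    have hεp : 0 < ε := by
      rw [hεdef, Finset.lt_inf'_iff]
      exact fun q _ => hεpos q
    obtain ⟨m, hm⟩ := exists_nat_one_div_lt hεp
    obtain ⟨q, hq, hvq⟩ := mem_iUnion₂.1 (hx m).2
    apply hεprop q hq
    apply bb_mono (a := q.2 + 1/(m+1)) (b := q.2 + 1/(m+1)) _ _ hvq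
    · have : (1:ℝ)/(m+1) ≤ εf q := by
        have h1 : ε ≤ εf q := Finset.inf'_le _ hq
        push_cast at hm ⊢
        linarith
      linarith
    · have : (1:ℝ)/(m+1) ≤ εf q := by
        have h1 : ε ≤ εf q := Finset.inf'_le _ hq
        push_cast at hm ⊢
        linarith
      linarith
  have htendT : Filter.Tendsto (fun m => ρ (T m)) Filter.atTop (nhds 0) := by
    have := tendsto_measure_iInter_atTop (μ := ρ)
      (fun m => (hTmeas m).nullMeasurableSet) hTanti ⟨0, measure_ne_top _ _⟩
    rw [hTempty] at this
    simpa [Function.comp_def] using this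
  have hw4pos : (0:ℝ≥0∞) < w/4 := ENNReal.div_pos hw (by norm_num)
  obtain ⟨m, hm⟩ := (htendT.eventually_lt_const hw4pos).exists
  set τ : ℝ := 1/(m+1) with hτdef
  have hτpos : 0 < τ := by positivity
  set W' : Set ((Fin N₀ → ℝ) × (Fin N₁ → ℝ)) := (K' \ Ubb F) \ (⋃ q ∈ F, bb q.1 (q.2 + τ) (q.2 + τ)) with hW'def
  have hWw : w ≤ ρ W' + w/4 := by
    have h1 : w ≤ ρ (K' \ Ubb F) := by
      calc w = ρ (univ \ Ubb F) := rfl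
      _ ≤ ρ ((K' \ Ubb F) ∪ K'ᶜ) := measure_mono (fun v hv => by
            by_cases hvK : v ∈ K'
            · exact Or.inl ⟨hvK, hv.2⟩
            · exact Or.inr hvK)
      _ ≤ ρ (K' \ Ubb F) + ρ K'ᶜ := measure_union_le _ _
      _ = ρ (K' \ Ubb F) := by rw [hconc, add_zero]
    have h2 : ρ (K' \ Ubb F) ≤ ρ W' + ρ (T m) := by
      calc ρ (K' \ Ubb F) ≤ ρ (W' ∪ T m) := measure_mono (fun v hv => by
            by_cases hvc : v ∈ ⋃ q ∈ F, bb q.1 (q.2 + τ) (q.2 + τ)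
            · exact Or.inr ⟨hv, hvc⟩
            · exact Or.inl ⟨hv, hvc⟩)
      _ ≤ ρ W' + ρ (T m) := measure_union_le _ _
    calc w ≤ ρ W' + ρ (T m) := h1.trans h2
    _ ≤ ρ W' + w/4 := add_le_add_right hm.le _
  -- bad set
  set BadAll : Set ((Fin N₀ → ℝ) × (Fin N₁ → ℝ)) := ⋃ k : ℕ, {x | ∀ t : ℝ, 0 < t → t ≤ 1/(k+1) →
      Λ * ρ (bb x (t/4) (t/4)) < ρ (bb x t t)} with hBadDef
  have hBadNull : ρ BadAll = 0 := by
    apply measure_iUnion_null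
    intro k
    exact bad_null ρ hK'b hconc (by positivity : (0:ℝ) < 1/(k+1))
  set A' : Set ((Fin N₀ → ℝ) × (Fin N₁ → ℝ)) := W' \ BadAll with hA'def
  have hA'w : w ≤ ρ A' + w/4 := by
    refine hWw.trans (add_le_add_left ?_ _)
    calc ρ W' ≤ ρ (A' ∪ BadAll) := measure_mono (fun v hv => by
          by_cases hvB : v ∈ BadAll
          · exact Or.inr hvB
          · exact Or.inl ⟨hv, hvB⟩)
    _ ≤ ρ A' + ρ BadAll := measure_union_le _ _
    _ = ρ A' := by rw [hBadNull, add_zero]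
  -- Besicovitch
  set f : ((Fin N₀ → ℝ) × (Fin N₁ → ℝ)) → Set ℝ := fun x =>
    {t | 0 < t ∧ t ≤ min r₀ τ ∧ ρ (bb x t t) ≤ Λ * ρ (bb x (t/4) (t/4))} with hfdef
  have hf : ∀ x ∈ A', ∀ δ > 0, (f x ∩ Ioo 0 δ).Nonempty := by
    intro x hx δ hδ
    have hxB : x ∉ BadAll := hx.2
    have hmin : (0:ℝ) < min δ (min r₀ τ) := lt_min hδ (lt_min hr₀ hτpos)
    obtain ⟨k, hk⟩ := exists_nat_one_div_lt hmin
    have hxk : x ∉ {y : (Fin N₀ → ℝ) × (Fin N₁ → ℝ) | ∀ t : ℝ, 0 < t → t ≤ 1/(k+1) →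
        Λ * ρ (bb y (t/4) (t/4)) < ρ (bb y t t)} := fun hmem =>
      hxB (mem_iUnion.2 ⟨k, hmem⟩)
    simp only [mem_setOf_eq, not_forall] at hxk
    obtain ⟨t, ht, htk, hnt⟩ := hxk
    push_cast at hk
    refine ⟨t, ⟨ht, ?_, not_lt.1 hnt⟩, ht, ?_⟩
    · have : t ≤ 1/(k+1) := htk
      have h2 : (1:ℝ)/(k+1) ≤ min r₀ τ := by
        have := min_le_right δ (min r₀ τ)
        linarith [hk]
      linarith
    · have : t ≤ 1/(k+1) := htk
      have h2 : (1:ℝ)/(k+1) < δ := lt_of_lt_of_le hk (min_le_left _ _)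
      linarith
  obtain ⟨tB, htBcount, htBmem, htBrad, htBnull, htBdisj⟩ :=
    Besicovitch.exists_disjoint_closedBall_covering_ae_aux ρ f A' hf

  -- choose good rectangles inside the Besicovitch balls
  have hchoice : ∀ p : ((Fin N₀ → ℝ) × (Fin N₁ → ℝ)) × ℝ, ∃ q,
      (p ∈ tB → ρ (A' ∩ closedBall p.1 p.2) ≤ (CPe * Λ) * ρ (bb q.1 q.2 q.2) ∧
        (ρ (bb q.1 q.2 q.2) = 0 ∨
          (0 < q.2 ∧ q.2 ≤ r₀ ∧ bb q.1 q.2 q.2 ⊆ closedBall p.1 p.2 ∧ IsGood L σ ρ q))) := by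
    intro p
    by_cases hp : p ∈ tB
    · obtain ⟨hpos, hple, hgf⟩ := htBrad p hp
      have hcb : closedBall p.1 p.2 = bb p.1 p.2 p.2 := (bb_eq_closedBall p.1 hpos.le).symm
      obtain ⟨q, hq1, hq2⟩ := exists_good_in_ball hL hσ1 hσ2 ρ p.1 hpos
        (hple.trans (min_le_left _ _)) hgf
      refine ⟨q, fun _ => ⟨?_, ?_⟩⟩
      · calc ρ (A' ∩ closedBall p.1 p.2) ≤ ρ (bb p.1 p.2 p.2) := by
              rw [← hcb]; exact measure_mono inter_subset_right
        _ ≤ _ := hq1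
      · rcases hq2 with h | ⟨h1, h2, h3, h4⟩
        · exact Or.inl h
        · exact Or.inr ⟨h1, h2, by rw [hcb]; exact h3, h4⟩
    · exact ⟨p, fun h => absurd h hp⟩
  choose g hg using hchoice
  -- capture sums
  have hcover : ρ A' ≤ ∑' (p : tB), ρ (A' ∩ closedBall (p : (((Fin N₀ → ℝ) × (Fin N₁ → ℝ)) × ℝ)).1 (p : (((Fin N₀ → ℝ) × (Fin N₁ → ℝ)) × ℝ)).2) := by
    calc ρ A' ≤ ρ (A' ∩ ⋃ p ∈ tB, closedBall p.1 p.2) +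
        ρ (A' \ ⋃ (p : (((Fin N₀ → ℝ) × (Fin N₁ → ℝ)) × ℝ)) (_ : p ∈ tB), closedBall p.1 p.2) :=
          measure_le_inter_add_diff _ _ _
    _ = ρ (A' ∩ ⋃ p ∈ tB, closedBall p.1 p.2) := by rw [htBnull, add_zero]
    _ = ρ (⋃ p ∈ tB, A' ∩ closedBall p.1 p.2) := by rw [inter_iUnion₂]
    _ ≤ ∑' (p : tB), ρ (A' ∩ closedBall (p : (((Fin N₀ → ℝ) × (Fin N₁ → ℝ)) × ℝ)).1 (p : (((Fin N₀ → ℝ) × (Fin N₁ → ℝ)) × ℝ)).2) :=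
          measure_biUnion_le ρ htBcount _
  set S : ℝ≥0∞ := ∑' (p : tB), ρ (bb (g ↑p).1 (g ↑p).2 (g ↑p).2) with hSdef
  have hsumS : ρ A' ≤ (CPe * Λ) * S := by
    refine hcover.trans ?_
    rw [hSdef, ← ENNReal.tsum_mul_left]
    exact ENNReal.tsum_le_tsum (fun p => (hg ↑p p.2).1)
  have hwS : w ≤ (CPe * Λ) * S + w/4 := hA'w.trans (add_le_add_left hsumS _)
  have hkapS : kap N₀ N₁ σ * w < S := by
    by_contra hcon
    push_neg at hcon
    have h1 : (CPe * Λ) * S ≤ (CPe * Λ) * (kap N₀ N₁ σ * w) := mul_le_mul_right hcon _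
    have h2 : (CPe * Λ) * (kap N₀ N₁ σ * w) = 8⁻¹ * w := by
      rw [kap, ← hCPdef, ← hΛdef]
      have hprod : (8:ℝ≥0∞) * CPe * Λ = 8 * (CPe * Λ) := by ring
      rw [hprod, ENNReal.mul_inv (Or.inl (by norm_num)) (Or.inl (by norm_num))]
      calc (CPe * Λ) * (8⁻¹ * (CPe * Λ)⁻¹ * w)
          = ((CPe * Λ) * (CPe * Λ)⁻¹) * (8⁻¹ * w) := by ring
      _ = 8⁻¹ * w := by rw [ENNReal.mul_inv_cancel hCPΛ0 hCPΛtop, one_mul]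
    have h3 : w ≤ 8⁻¹ * w + w/4 := hwS.trans (add_le_add_left (h1.trans_eq h2) _)
    have h4 : (8:ℝ≥0∞)⁻¹ * w + w/4 < w := by
      have he : (8:ℝ≥0∞)⁻¹ * w + w/4 = (8⁻¹ + 4⁻¹) * w := by
        rw [ENNReal.div_eq_inv_mul]
        ring
      rw [he]
      calc ((8:ℝ≥0∞)⁻¹ + 4⁻¹) * w < 1 * w := by
            apply ENNReal.mul_lt_mul_left hw hwtop
            rw [show ((8:ℝ≥0∞)⁻¹ + 4⁻¹) = ENNReal.ofReal (1/8 + 1/4) by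
              rw [ENNReal.ofReal_add (by norm_num) (by norm_num)]
              congr 1
              · rw [ENNReal.ofReal_div_of_pos (by norm_num)]
                norm_num
              · rw [ENNReal.ofReal_div_of_pos (by norm_num)]
                norm_num]
            calc ENNReal.ofReal (1/8 + 1/4) < ENNReal.ofReal 1 := by
                  rw [ENNReal.ofReal_lt_ofReal_iff (by norm_num)]
                  norm_num
            _ = 1 := ENNReal.ofReal_one
      _ = w := one_mul w
    exact absurd h3 (not_le.2 h4)
  -- extract a finite subfamily
  have hfin : ∃ F₁ : Finset tB, kap N₀ N₁ σ * w <
      ∑ p ∈ F₁, ρ (bb (g ↑p).1 (g ↑p).2 (g ↑p).2) := by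
    rw [hSdef, ENNReal.tsum_eq_iSup_sum] at hkapS
    exact lt_iSup_iff.1 hkapS
  obtain ⟨F₁, hF₁⟩ := hfin
  set F₂ : Finset tB := F₁.filter (fun p => ρ (bb (g ↑p).1 (g ↑p).2 (g ↑p).2) ≠ 0) with hF₂def
  have hsumF₂ : kap N₀ N₁ σ * w < ∑ p ∈ F₂, ρ (bb (g ↑p).1 (g ↑p).2 (g ↑p).2) := by
    rw [hF₂def, Finset.sum_filter_ne_zero]
    exact hF₁
  have hF₂props : ∀ p ∈ F₂, 0 < (g ↑p).2 ∧ (g ↑p).2 ≤ r₀ ∧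
      bb (g ↑p).1 (g ↑p).2 (g ↑p).2 ⊆ closedBall (↑p : (((Fin N₀ → ℝ) × (Fin N₁ → ℝ)) × ℝ)).1 (↑p : (((Fin N₀ → ℝ) × (Fin N₁ → ℝ)) × ℝ)).2 ∧
      IsGood L σ ρ (g ↑p) := by
    intro p hp
    have hne := (Finset.mem_filter.1 hp).2
    rcases (hg ↑p p.2).2 with h | h
    · exact absurd h hne
    · exact h
  -- Besicovitch balls avoid the old rectangles
  have hballold : ∀ p : tB, ∀ q ∈ F,
      Disjoint (closedBall (↑p : (((Fin N₀ → ℝ) × (Fin N₁ → ℝ)) × ℝ)).1 (↑p : (((Fin N₀ → ℝ) × (Fin N₁ → ℝ)) × ℝ)).2) (bb q.1 q.2 q.2) := by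
    intro p q hq
    obtain ⟨hpos, hple, -⟩ := htBrad ↑p p.2
    have hxA : (↑p : (((Fin N₀ → ℝ) × (Fin N₁ → ℝ)) × ℝ)).1 ∈ A' := htBmem ↑p p.2
    rw [Set.disjoint_left]
    intro v hv hvq
    apply hxA.1.2
    refine mem_iUnion₂.2 ⟨q, hq, ?_⟩
    have hvb : v ∈ bb (↑p : (((Fin N₀ → ℝ) × (Fin N₁ → ℝ)) × ℝ)).1 (↑p : (((Fin N₀ → ℝ) × (Fin N₁ → ℝ)) × ℝ)).2 (↑p : (((Fin N₀ → ℝ) × (Fin N₁ → ℝ)) × ℝ)).2 := by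
      rw [bb_eq_closedBall _ hpos.le]; exact hv
    have hxv : (↑p : (((Fin N₀ → ℝ) × (Fin N₁ → ℝ)) × ℝ)).1 ∈ bb v (↑p : (((Fin N₀ → ℝ) × (Fin N₁ → ℝ)) × ℝ)).2 (↑p : (((Fin N₀ → ℝ) × (Fin N₁ → ℝ)) × ℝ)).2 := bb_comm.1 hvb
    have := bb_subset_bb hvq hxv
    refine bb_mono ?_ ?_ this <;>
      · have : (↑p : (((Fin N₀ → ℝ) × (Fin N₁ → ℝ)) × ℝ)).2 ≤ τ := hple.trans (min_le_right _ _)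
        linarith
  -- the new rectangles
  set newF : Finset ((((Fin N₀ → ℝ) × (Fin N₁ → ℝ))) × ℝ) :=
    Finset.image (fun p : tB => g ↑p) F₂ with hnewFdef
  have hginj : ∀ p ∈ F₂, ∀ p' ∈ F₂, g ↑p = g ↑p' → p = p' := by
    intro p hp p' hp' heq
    by_contra hne
    have hpp' : (↑p : (((Fin N₀ → ℝ) × (Fin N₁ → ℝ)) × ℝ)) ≠ ↑p' := fun h => hne (Subtype.ext h)
    have hd := htBdisj p.2 p'.2 hpp'
    have hne0 := (Finset.mem_filter.1 hp).2
    have hsub1 := (hF₂props p hp).2.2.1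
    have hsub2 := (hF₂props p' hp').2.2.1
    rw [← heq] at hsub2
    obtain ⟨v, hv⟩ := nonempty_of_measure_ne_zero hne0
    exact Set.disjoint_left.1 hd (hsub1 hv) (hsub2 hv)
  have hnewprops : ∀ q ∈ newF, 0 < q.2 ∧ q.2 ≤ r₀ ∧ IsGood L σ ρ q := by
    intro q hq
    rw [hnewFdef] at hq
    obtain ⟨p, hp, hpq⟩ : ∃ p ∈ F₂, g ↑p = q := Finset.mem_image.1 hq
    subst hpq
    exact ⟨(hF₂props p hp).1, (hF₂props p hp).2.1, (hF₂props p hp).2.2.2⟩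
  have hcross : ∀ q ∈ F, ∀ q' ∈ newF, Disjoint (bb q.1 q.2 q.2) (bb q'.1 q'.2 q'.2) := by
    intro q hq q' hq'
    rw [hnewFdef] at hq'
    obtain ⟨p, hp, hpq⟩ : ∃ p ∈ F₂, g ↑p = q' := Finset.mem_image.1 hq'
    subst hpq
    exact ((hballold p q hq).mono_left (hF₂props p hp).2.2.1).symm
  have hnewpd : (↑newF : Set ((((Fin N₀ → ℝ) × (Fin N₁ → ℝ))) × ℝ)).PairwiseDisjoint
      (fun q => bb q.1 q.2 q.2) := by
    intro q hq q' hq' hne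
    simp only [hnewFdef, Finset.coe_image, mem_image, Finset.mem_coe] at hq hq'
    obtain ⟨p, hp, rfl⟩ := hq
    obtain ⟨p', hp', rfl⟩ := hq'
    have hpp' : (↑p : (((Fin N₀ → ℝ) × (Fin N₁ → ℝ)) × ℝ)) ≠ ↑p' := by
      intro h
      exact hne (by rw [Subtype.ext h])
    exact ((htBdisj p.2 p'.2 hpp').mono (hF₂props p hp).2.2.1 (hF₂props p' hp').2.2.1)
  have hpd : (↑(F ∪ newF) : Set ((((Fin N₀ → ℝ) × (Fin N₁ → ℝ))) × ℝ)).PairwiseDisjoint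
      (fun q => bb q.1 q.2 q.2) := by
    rw [Finset.coe_union]
    apply Set.pairwiseDisjoint_union.2
    refine ⟨hF.1, hnewpd, ?_⟩
    intro q hq q' hq' _
    exact hcross q hq q' hq'
  -- accounting
  have hnewdisjU : ∀ q ∈ newF, Disjoint (bb q.1 q.2 q.2) (Ubb F) := by
    intro q hq
    rw [Ubb, disjoint_iUnion₂_right]
    intro q' hq'
    exact (hcross q' hq' q hq).symm
  have hUsub : Ubb F ⊆ Ubb (F ∪ newF) := by
    intro v hv
    obtain ⟨q, hq, hvq⟩ := mem_iUnion₂.1 hv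
    exact mem_iUnion₂.2 ⟨q, Finset.mem_union_left _ hq, hvq⟩
  have hnewsubU : (⋃ q ∈ newF, bb q.1 q.2 q.2) ⊆ Ubb (F ∪ newF) := by
    intro v hv
    obtain ⟨q, hq, hvq⟩ := mem_iUnion₂.1 hv
    exact mem_iUnion₂.2 ⟨q, Finset.mem_union_right _ hq, hvq⟩
  have haccount : ρ (univ \ Ubb (F ∪ newF)) +
      ∑ p ∈ F₂, ρ (bb (g ↑p).1 (g ↑p).2 (g ↑p).2) ≤ w := by
    have hdisjsum : ρ (⋃ q ∈ newF, bb q.1 q.2 q.2) = ∑ q ∈ newF, ρ (bb q.1 q.2 q.2) :=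
      measure_biUnion_finset hnewpd (fun q _ => measurableSet_bb _ _ _)
    have hsumimg : ∑ q ∈ newF, ρ (bb q.1 q.2 q.2) =
        ∑ p ∈ F₂, ρ (bb (g ↑p).1 (g ↑p).2 (g ↑p).2) := by
      rw [hnewFdef]
      exact Finset.sum_image hginj
    have hmeasnew : MeasurableSet (⋃ q ∈ newF, bb q.1 q.2 q.2) :=
      MeasurableSet.biUnion newF.countable_toSet (fun q _ => measurableSet_bb _ _ _)
    have hdisj2 : Disjoint (univ \ Ubb (F ∪ newF)) (⋃ q ∈ newF, bb q.1 q.2 q.2) := by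
      rw [Set.disjoint_right]
      intro v hv
      simp only [mem_diff, mem_univ, true_and, not_not]
      exact hnewsubU hv
    calc ρ (univ \ Ubb (F ∪ newF)) + ∑ p ∈ F₂, ρ (bb (g ↑p).1 (g ↑p).2 (g ↑p).2)
        = ρ (univ \ Ubb (F ∪ newF)) + ρ (⋃ q ∈ newF, bb q.1 q.2 q.2) := by
          rw [hdisjsum, hsumimg]
    _ = ρ ((univ \ Ubb (F ∪ newF)) ∪ ⋃ q ∈ newF, bb q.1 q.2 q.2) :=
          (measure_union hdisj2 hmeasnew).symm
    _ ≤ ρ (univ \ Ubb F) := by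
          apply measure_mono
          rintro v (hv | hv)
          · exact ⟨trivial, fun hvU => hv.2 (hUsub hvU)⟩
          · obtain ⟨q, hq, hvq⟩ := mem_iUnion₂.1 hv
            refine ⟨trivial, fun hvU => ?_⟩
            exact Set.disjoint_left.1 (hnewdisjU q hq) hvq hvU
  refine ⟨F ∪ newF, Finset.subset_union_left, ⟨hpd, ?_⟩, ?_⟩
  · intro q hq
    rcases Finset.mem_union.1 hq with h | h
    · exact hF.2 q h
    · exact hnewprops q h
  · calc ρ (univ \ Ubb (F ∪ newF)) + kap N₀ N₁ σ * ρ (univ \ Ubb F)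
        ≤ ρ (univ \ Ubb (F ∪ newF)) + ∑ p ∈ F₂, ρ (bb (g ↑p).1 (g ↑p).2 (g ↑p).2) :=
          add_le_add_right hsumF₂.le _
    _ ≤ w := haccount


/-- Iterating rounds: the leftover mass decays geometrically. -/
lemma iterate_rounds {L σ : ℝ} (hL : 8 ≤ L) (hσ1 : 0 < σ) (hσ2 : σ < 1/2)
    (ρ : Measure ((Fin N₀ → ℝ) × (Fin N₁ → ℝ))) [IsFiniteMeasure ρ]
    {K' : Set ((Fin N₀ → ℝ) × (Fin N₁ → ℝ))} (hK'b : Bornology.IsBounded K')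
    (hK'm : MeasurableSet K') (hconc : ρ K'ᶜ = 0) {r₀ : ℝ} (hr₀ : 0 < r₀) (n : ℕ) :
    ∃ F, GoodF L σ r₀ ρ F ∧
      ρ (univ \ Ubb F) ≤ (1 - kap N₀ N₁ σ)^n * ρ univ := by
  induction n with
  | zero =>
    refine ⟨∅, ⟨?_, ?_⟩, ?_⟩
    · simp [Set.pairwiseDisjoint_empty]
    · intro q hq
      exact absurd hq (Finset.notMem_empty q)
    · simp [Ubb]
  | succ n ih =>
    obtain ⟨F, hF, hb⟩ := ih
    by_cases hw : ρ (univ \ Ubb F) = 0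
    · exact ⟨F, hF, by rw [hw]; exact zero_le⟩
    · obtain ⟨F', hFF', hF', hb'⟩ := round hL hσ1 hσ2 ρ hK'b hK'm hconc hr₀ hF hw
      refine ⟨F', hF', ?_⟩
      have h1 : ρ (univ \ Ubb F') ≤ ρ (univ \ Ubb F) - kap N₀ N₁ σ * ρ (univ \ Ubb F) :=
        ENNReal.le_sub_of_add_le_right (ENNReal.mul_ne_top (by
          exact lt_of_le_of_lt (kap_le_one hσ1 hσ2) (by norm_num) |>.ne) (measure_ne_top _ _)) hb'
      have h2 : ρ (univ \ Ubb F) - kap N₀ N₁ σ * ρ (univ \ Ubb F) =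
          (1 - kap N₀ N₁ σ) * ρ (univ \ Ubb F) := by
        rw [ENNReal.sub_mul (fun _ _ => measure_ne_top _ _), one_mul]
      calc ρ (univ \ Ubb F') ≤ (1 - kap N₀ N₁ σ) * ρ (univ \ Ubb F) := h1.trans_eq h2
      _ ≤ (1 - kap N₀ N₁ σ) * ((1 - kap N₀ N₁ σ)^n * ρ univ) := mul_le_mul_right hb _
      _ = (1 - kap N₀ N₁ σ)^(n+1) * ρ univ := by rw [pow_succ]; ring

/-- The final covering lemma in image-space coordinates. -/
lemma final_image {L σ : ℝ} (hL : 8 ≤ L) (hσ1 : 0 < σ) (hσ2 : σ < 1/2)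
    (ρ : Measure ((Fin N₀ → ℝ) × (Fin N₁ → ℝ))) [IsFiniteMeasure ρ]
    {K' : Set ((Fin N₀ → ℝ) × (Fin N₁ → ℝ))} (hK'b : Bornology.IsBounded K')
    (hK'm : MeasurableSet K') (hconc : ρ K'ᶜ = 0) {r₀ : ℝ} (hr₀ : 0 < r₀)
    {ε : ℝ} (hε : 0 < ε) :
    ∃ F, GoodF L σ r₀ ρ F ∧
      ρ (univ \ Ubb F) ≤ ENNReal.ofReal ε * ρ univ := by
  have hlt1 : (1 : ℝ≥0∞) - kap N₀ N₁ σ < 1 :=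
    ENNReal.sub_lt_self (by norm_num) (by norm_num) kap_pos.ne'
  have htends := ENNReal.tendsto_pow_atTop_nhds_zero_of_lt_one hlt1
  have hεpos : (0:ℝ≥0∞) < ENNReal.ofReal ε := ENNReal.ofReal_pos.2 hε
  obtain ⟨n, hn⟩ := (htends.eventually_lt_const hεpos).exists
  obtain ⟨F, hF, hb⟩ := iterate_rounds hL hσ1 hσ2 ρ hK'b hK'm hconc hr₀ n
  exact ⟨F, hF, hb.trans (mul_le_mul_left hn.le _)⟩

/-- Numeric identity for the constant in the theorem statement. -/
lemma const_eq {σ : ℝ} :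
    σ ^ N₁ * (1 / 3) * ((2 : ℝ) ^ (2 * (N₀ + N₁) + N₀ + 1))⁻¹ * (1 + 1 / 6)⁻¹ =
      (1/7) * (1/8)^N₀ * (σ/4)^N₁ := by
  have h2 : (2:ℝ) ^ (2 * (N₀ + N₁) + N₀ + 1) = 8^N₀ * 4^N₁ * 2 := by
    rw [show 2 * (N₀ + N₁) + N₀ + 1 = 3*N₀ + (2*N₁ + 1) by ring, pow_add, pow_add,
      pow_mul, pow_mul]
    norm_num
    ring
  rw [h2, div_pow, div_pow]
  have h8 : (8:ℝ)^N₀ ≠ 0 := pow_ne_zero _ (by norm_num)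
  have h4 : (4:ℝ)^N₁ ≠ 0 := pow_ne_zero _ (by norm_num)
  field_simp
  ring

lemma habs {c w y r : ℝ} (hc : 0 < c) : |w - y / c| ≤ r ↔ |c * w - y| ≤ c * r := by
  have h1 : |c * w - y| = c * |w - y / c| := by
    have he : c * w - y = c * (w - y / c) := by field_simp
    rw [he, abs_mul, abs_of_pos hc]
  rw [h1]
  exact (mul_le_mul_iff_right₀ hc).symm

end Stmt6

open Stmt6

/-- Covering by good rectangles: finitely many pairwise disjoint rectangles with
`0 < rᵢ ≤ r₀`, each satisfying the core-measure lower bound relative to `K`, and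
covering `K` up to `ε μ(K)`. -/
theorem stmt_6 (N₀ N₁ : ℕ) (hN₁ : 0 < N₁)
    (μ : Measure ((Fin N₀ → ℝ) × (Fin N₁ → ℝ))) [IsLocallyFiniteMeasure μ]
    (K : Set ((Fin N₀ → ℝ) × (Fin N₁ → ℝ))) (hK : IsCompact K) (hμK : 0 < μ K)
    (r₀ L σ : ℝ) (hr₀ : 0 < r₀) (hL : 8 ≤ L) (hσ : σ ∈ Set.Ioo (0 : ℝ) (1 / 2))
    (ε : ℝ) (hε : 0 < ε) :
    ∃ (M : ℕ) (x : Fin M → (Fin N₀ → ℝ) × (Fin N₁ → ℝ)) (r : Fin M → ℝ),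
      (∀ i, 0 < r i ∧ r i ≤ r₀) ∧
      (Pairwise fun i j => Disjoint (Erect L (x i) (r i)) (Erect L (x j) (r j))) ∧
      (∀ i,
        ENNReal.ofReal
            (σ ^ N₁ * (1 / 3) * ((2 : ℝ) ^ (2 * (N₀ + N₁) + N₀ + 1))⁻¹ * (1 + 1 / 6)⁻¹)
          * μ (Erect L (x i) (r i) ∩ K) ≤ μ (Score L σ (x i) (r i) ∩ K) ∧
        0 < μ (Score L σ (x i) (r i) ∩ K)) ∧
      μ (K \ ⋃ i, Erect L (x i) (r i)) ≤ ENNReal.ofReal ε * μ K := by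
  classical
  obtain ⟨hσ1, hσ2⟩ := hσ
  have hLpos : (0:ℝ) < L := by linarith
  have hcpos : (0:ℝ) < L^2/2 := by positivity
  -- the scaling maps
  set T : (Fin N₀ → ℝ) × (Fin N₁ → ℝ) → (Fin N₀ → ℝ) × (Fin N₁ → ℝ) :=
    fun y => (fun i => y.1 i / (L^2/2), fun i => y.2 i / 2) with hTdef
  set φ : (Fin N₀ → ℝ) × (Fin N₁ → ℝ) → (Fin N₀ → ℝ) × (Fin N₁ → ℝ) :=
    fun w => (fun i => (L^2/2) * w.1 i, fun i => 2 * w.2 i) with hφdef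
  have hTcont : Continuous T := by
    rw [hTdef]
    apply Continuous.prodMk
    · exact continuous_pi fun i => ((continuous_apply i).comp continuous_fst).div_const _
    · exact continuous_pi fun i => ((continuous_apply i).comp continuous_snd).div_const _
  have hTmeas : Measurable T := hTcont.measurable
  have hTφ : ∀ w, T (φ w) = w := by
    intro w
    rw [hTdef, hφdef]
    refine Prod.ext ?_ ?_ <;> funext i <;> simp <;> field_simp
  -- identification of rectangles with preimages of boxes
  have hErect : ∀ w r, Erect L (φ w) r = T ⁻¹' (bb w r r) := by
    intro w r
    ext y
    simp only [Erect, bb, mem_setOf_eq, mem_preimage, hTdef, hφdef]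
    apply and_congr
    · apply forall_congr'
      intro i
      rw [show L ^ 2 * r / 2 = (L^2/2) * r by ring]
      exact (habs hcpos).symm
    · apply forall_congr'
      intro i
      rw [show 2 * r = 2 * r by ring]
      exact (habs (by norm_num : (0:ℝ) < 2)).symm
  have hScore : ∀ w r, Score L σ (φ w) r = T ⁻¹' (bb w (r - r/L) (σ*r)) := by
    intro w r
    ext y
    simp only [Score, bb, mem_setOf_eq, mem_preimage, hTdef, hφdef]
    apply and_congr
    · apply forall_congr'
      intro i
      rw [show L ^ 2 * r / 2 - L * r / 2 = (L^2/2) * (r - r/L) by field_simp]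
      exact (habs hcpos).symm
    · apply forall_congr'
      intro i
      rw [show 2 * σ * r = 2 * (σ * r) by ring]
      exact (habs (by norm_num : (0:ℝ) < 2)).symm
  -- measures
  have hKm : MeasurableSet K := hK.isClosed.measurableSet
  set ν : Measure ((Fin N₀ → ℝ) × (Fin N₁ → ℝ)) := μ.restrict K with hνdef
  haveI : IsFiniteMeasure ν := ⟨by
    rw [hνdef, Measure.restrict_apply_univ]
    exact hK.measure_lt_top⟩
  set ρm : Measure ((Fin N₀ → ℝ) × (Fin N₁ → ℝ)) := ν.map T with hρdef
  haveI : IsFiniteMeasure ρm := ⟨by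
    rw [hρdef, Measure.map_apply hTmeas MeasurableSet.univ]
    exact measure_lt_top ν _⟩
  have hρbb : ∀ w a b, ρm (bb w a b) = ν (T ⁻¹' (bb w a b)) := fun w a b =>
    Measure.map_apply hTmeas (measurableSet_bb w a b)
  -- concentration set
  set K' : Set ((Fin N₀ → ℝ) × (Fin N₁ → ℝ)) := T '' K with hK'def
  have hK'c : IsCompact K' := hK.image hTcont
  have hK'b : Bornology.IsBounded K' := hK'c.isBounded
  have hK'm : MeasurableSet K' := hK'c.isClosed.measurableSet
  have hconc : ρm K'ᶜ = 0 := by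
    rw [hρdef, Measure.map_apply hTmeas hK'm.compl]
    have hsub : T ⁻¹' K'ᶜ ⊆ Kᶜ := by
      intro y hy hyK
      exact hy (mem_image_of_mem T hyK)
    apply measure_mono_null hsub
    rw [hνdef, Measure.restrict_apply hKm.compl]
    simp
  -- apply the image-space covering lemma
  obtain ⟨F, ⟨hpd, hprops⟩, hleft⟩ :=
    final_image hL hσ1 hσ2 ρm hK'b hK'm hconc hr₀ hε
  -- enumerate the family
  set M := Fintype.card ↥F with hM
  set e : Fin M → ↥F := fun i => (Fintype.equivFin ↥F).symm i with hedef
  have heinj : Function.Injective e := (Fintype.equivFin ↥F).symm.injective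
  set q : Fin M → (((Fin N₀ → ℝ) × (Fin N₁ → ℝ)) × ℝ) := fun i => (e i).1 with hqdef
  have hqmem : ∀ i, q i ∈ F := fun i => (e i).2
  have hqinj : ∀ i j, q i = q j → i = j := fun i j h => heinj (Subtype.ext h)
  have hmeasdiff : MeasurableSet (univ \ Ubb F) := MeasurableSet.univ.diff (measurableSet_Ubb F)
  refine ⟨M, fun i => φ (q i).1, fun i => (q i).2, ?_, ?_, ?_, ?_⟩
  · intro i
    obtain ⟨h1, h2, -⟩ := hprops _ (hqmem i)
    exact ⟨h1, h2⟩
  · intro i j hij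
    have hd := hpd (hqmem i) (hqmem j) (fun h => hij (hqinj _ _ h))
    rw [hErect, hErect]
    exact Disjoint.preimage T hd
  · intro i
    obtain ⟨-, -, hg⟩ := hprops _ (hqmem i)
    have hE : μ (Erect L (φ (q i).1) (q i).2 ∩ K) = ρm (bb (q i).1 (q i).2 (q i).2) := by
      rw [hErect]
      exact ((Measure.map_apply hTmeas (measurableSet_bb _ _ _)).trans
        (Measure.restrict_apply (hTmeas (measurableSet_bb _ _ _)))).symm
    have hS : μ (Score L σ (φ (q i).1) (q i).2 ∩ K) =
        ρm (bb (q i).1 ((q i).2 - (q i).2/L) (σ*(q i).2)) := by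
      rw [hScore]
      exact ((Measure.map_apply hTmeas (measurableSet_bb _ _ _)).trans
        (Measure.restrict_apply (hTmeas (measurableSet_bb _ _ _)))).symm
    rw [hE, hS, const_eq]
    exact ⟨hg.1, hg.2⟩
  · have hsub : K \ ⋃ i, Erect L (φ (q i).1) (q i).2 ⊆ T ⁻¹' (univ \ Ubb F) ∩ K := by
      intro y hy
      refine ⟨⟨trivial, ?_⟩, hy.1⟩
      intro hyU
      obtain ⟨p, hp, hyp⟩ := mem_iUnion₂.1 hyU
      apply hy.2
      have hex : ∃ i, q i = p := ⟨Fintype.equivFin ↥F ⟨p, hp⟩, by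
        rw [hqdef, hedef]
        simp⟩
      obtain ⟨i, rfl⟩ := hex
      refine mem_iUnion.2 ⟨i, ?_⟩
      rw [hErect]
      exact hyp
    calc μ (K \ ⋃ i, Erect L (φ (q i).1) (q i).2)
        ≤ μ (T ⁻¹' (univ \ Ubb F) ∩ K) := measure_mono hsub
    _ = ρm (univ \ Ubb F) :=
        ((Measure.map_apply hTmeas hmeasdiff).trans
          (Measure.restrict_apply (hTmeas hmeasdiff))).symm
    _ ≤ ENNReal.ofReal ε * ρm univ := hleft
    _ = ENNReal.ofReal ε * μ K := by
        rw [hρdef, Measure.map_apply hTmeas MeasurableSet.univ, Set.preimage_univ, hνdef,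
          Measure.restrict_apply MeasurableSet.univ, univ_inter]
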